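/- For any a > b > 0 and c ∈ (1/a, 1/b), setting v = (a, b, −c)ᵀ, B the 3×3 all-ones matrix, and A = B + vvᵀ, the matrix |A| − |B| obtained by applying x ↦ |x| entrywise to A and B has determinant −4b²(ac−1)² < 0; hence x ↦ |x| applied entrywise is not Loewner monotone on 3×3 positive semidefinite matrices of rank at most 2. -/

import Mathlib

lemma psd_vecMulVec' {n : Type*} [Fintype n] (v : n → ℝ) :
    (Matrix.vecMulVec v v).PosSemidef := by
  rw [Matrix.vecMulVec_eq (ι := Unit)]
  have h : Matrix.replicateRow Unit v = Matrix.conjTranspose (Matrix.replicateCol Unit v) := by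
    ext i j; simp
  rw [h]
  exact Matrix.posSemidef_self_mul_conjTranspose _

theorem stmt8 (a b c : ℝ) (hb : 0 < b) (hba : b < a) (hc1 : 1 / a < c) (hc2 : c < 1 / b) :
    let v : Fin 3 → ℝ := ![a, b, -c]
    let B : Matrix (Fin 3) (Fin 3) ℝ := Matrix.of fun _ _ => 1
    let A := B + Matrix.vecMulVec v v
    (A - B).PosSemidef ∧ B.PosSemidef ∧ A.rank ≤ 2 ∧
    (A.map (fun x => |x|) - B.map fun x => |x|).det = -4 * b ^ 2 * (a * c - 1) ^ 2 ∧
    ¬ (A.map (fun x => |x|) - B.map fun x => |x|).PosSemidef := by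
  intro v B A
  have ha : 0 < a := hb.trans hba
  have hc : 0 < c := lt_trans (by positivity) hc1
  have hac : 1 < a * c := by
    rw [div_lt_iff₀ ha] at hc1; linarith
  have hbc : b * c < 1 := by
    rw [lt_div_iff₀ hb] at hc2; linarith
  have hAB : A - B = Matrix.vecMulVec v v := by
    simp [A]
  have hM : A.map (fun x => |x|) - B.map (fun x => |x|) =
      !![a^2, a*b, a*c-2; a*b, b^2, -(b*c); a*c-2, -(b*c), c^2] := by
    ext i j
    fin_cases i <;> fin_cases j <;>
      simp [A, B, v, Matrix.vecMulVec, Matrix.map_apply] <;>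
      first
        | (rw [abs_of_pos (by nlinarith)]; ring)
        | (rw [abs_of_neg (by nlinarith)]; ring)
  refine ⟨?_, ?_, ?_, ?_, ?_⟩
  · rw [hAB]; exact psd_vecMulVec' v
  · have : B = Matrix.vecMulVec (fun _ => (1:ℝ)) (fun _ => (1:ℝ)) := by
      ext i j; simp [B, Matrix.vecMulVec]
    rw [this]; exact psd_vecMulVec' _
  · -- rank: A = C * Cᵀ with C : Matrix (Fin 3) (Fin 2)
    have hfac : A = (Matrix.of fun i j => ![(1:ℝ), v i] j : Matrix (Fin 3) (Fin 2) ℝ) *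
        (Matrix.of fun i j => ![(1:ℝ), v j] i : Matrix (Fin 2) (Fin 3) ℝ) := by
      ext i j
      simp [A, B, Matrix.mul_apply, Fin.sum_univ_two, Matrix.vecMulVec]
    calc A.rank ≤ (Matrix.of fun i j => ![(1:ℝ), v i] j : Matrix (Fin 3) (Fin 2) ℝ).rank := by
          rw [hfac]; exact Matrix.rank_mul_le_left _ _
      _ ≤ Fintype.card (Fin 2) := Matrix.rank_le_card_width _
      _ = 2 := by simp
  · rw [hM, Matrix.det_fin_three]
    simp [Matrix.cons_val_zero, Matrix.cons_val_one]
    ring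
  · intro h
    have hd : (0:ℝ) ≤ ((A.map fun x => |x|) - B.map fun x => |x|).det := by
      exact h.det_nonneg
    rw [hM, Matrix.det_fin_three] at hd
    simp [Matrix.cons_val_zero, Matrix.cons_val_one] at hd
    nlinarith [mul_pos (mul_pos hb hb) (mul_pos (sub_pos.mpr hac) (sub_pos.mpr hac))]
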